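/- Let q be a prime power and let j ≥ 1 and m ≥ 1 be integers. Then the number of tuples (a_1, …, a_m) ∈ (F_{q^j})^m such that the subfield F_q(a_1, …, a_m) of F_{q^j} generated over F_q by a_1, …, a_m is a proper subfield of F_{q^j} is at most 2^m · q^{jm/2}. -/

import Mathlib

open Polynomial in
lemma aux_ncard_pow_eq_le {R : Type*} [CommRing R] [IsDomain R] (N : ℕ) (hN : 2 ≤ N) :
    {x : R | x ^ N = x}.ncard ≤ N := by
  classical
  set f : R[X] := X ^ N - X with hf
  have hdeg : f.natDegree = N := by
    rw [hf, natDegree_sub_eq_left_of_natDegree_lt] <;>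
      simp only [natDegree_X_pow, natDegree_X] <;> omega
  have hf0 : f ≠ 0 := by
    intro h; rw [h] at hdeg; simp at hdeg; omega
  have hsub : {x : R | x ^ N = x} ⊆ (f.roots.toFinset : Set R) := by
    intro x hx
    simp only [Set.mem_setOf_eq] at hx
    simp only [Finset.mem_coe, Multiset.mem_toFinset, mem_roots hf0]
    simp [IsRoot, hf, sub_eq_zero, hx]
  calc {x : R | x ^ N = x}.ncard ≤ (f.roots.toFinset : Set R).ncard :=
        Set.ncard_le_ncard hsub (f.roots.toFinset : Set R).toFinite
    _ = f.roots.toFinset.card := Set.ncard_coe_finset _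
    _ ≤ Multiset.card f.roots := Multiset.toFinset_card_le _
    _ ≤ f.natDegree := card_roots' f
    _ = N := hdeg

lemma aux_ncard_biUnion_le {α ι : Type*} (s : Finset ι) (f : ι → Set α) :
    (⋃ i ∈ s, f i).ncard ≤ ∑ i ∈ s, (f i).ncard := by
  classical
  induction s using Finset.induction with
  | empty => simp
  | insert _ _ h ih =>
      rename_i a s
      rw [Finset.sum_insert h, Finset.set_biUnion_insert]
      exact (Set.ncard_union_le _ _).trans (add_le_add_right ih _)

lemma aux_geom_sum_le {p : ℕ} (hp : 2 ≤ p) (t : ℕ) :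
    ∑ e ∈ Finset.Icc 1 t, p ^ e ≤ 2 * p ^ t := by
  induction t with
  | zero => simp
  | succ t ih =>
      rw [Finset.sum_Icc_succ_top (by omega)]
      have h1 : p ^ t * 2 ≤ p ^ t * p := Nat.mul_le_mul_left _ hp
      have h2 : p ^ (t + 1) = p ^ t * p := pow_succ p t
      omega

theorem card_tuples_generating_proper_subfield_le
    (q : ℕ) (hq : ∃ p k : ℕ, p.Prime ∧ 0 < k ∧ q = p ^ k)
    (j m : ℕ) (hj : 1 ≤ j) (hm : 1 ≤ m)
    (F : Type*) [Field F] [Fintype F] (hF : Fintype.card F = q ^ j) :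
    (Set.ncard {a : Fin m → F |
        Subfield.closure ({x : F | x ^ q = x} ∪ Set.range a) ≠ ⊤} : ℝ)
      ≤ 2 ^ m * (q : ℝ) ^ (((j : ℝ) * (m : ℝ)) / 2) := by
  classical
  obtain ⟨p, k, hp, hk, rfl⟩ := hq
  have hp2 : 2 ≤ p := hp.two_le
  set t : ℕ := k * j / 2 with ht
  set S : Set F := ⋃ e ∈ Finset.Icc 1 t, {x : F | x ^ p ^ e = x} with hS
  set B : Set (Fin m → F) := {a : Fin m → F |
      Subfield.closure ({x : F | x ^ (p ^ k) = x} ∪ Set.range a) ≠ ⊤} with hB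
  -- each coordinate of a bad tuple lies in S
  have hmem : ∀ a ∈ B, ∀ i, a i ∈ S := by
    intro a ha i
    set K := Subfield.closure ({x : F | x ^ (p ^ k) = x} ∪ Set.range a) with hK
    haveI : Fintype K := Fintype.ofFinite K
    have hcard : Fintype.card F = Fintype.card K ^ Module.finrank K F :=
      Module.card_eq_pow_finrank (K := K) (V := F)
    set n := Module.finrank K F with hn
    set c := Fintype.card K with hc
    have hc2 : 2 ≤ c := Fintype.one_lt_card
    have hcF : 2 ≤ Fintype.card F := by
      rw [hF]
      exact Nat.one_lt_pow (by omega)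
        (lt_of_lt_of_le hp2 (Nat.le_self_pow (by omega) p))
    have hn0 : n ≠ 0 := by
      intro h
      rw [h, pow_zero] at hcard
      omega
    have h1 : c ^ n = p ^ (k * j) := by
      rw [← hcard, hF, ← pow_mul]
    have hdvd : c ∣ p ^ (k * j) := h1 ▸ dvd_pow_self c hn0
    obtain ⟨e, he, hce⟩ := (Nat.dvd_prime_pow hp).mp hdvd
    have hen : e * n = k * j := by
      have h2 : p ^ (e * n) = p ^ (k * j) := by
        rw [pow_mul, ← hce, h1]
      exact Nat.pow_right_injective hp2 h2
    have he1 : 1 ≤ e := by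
      rcases Nat.eq_zero_or_pos e with h | h
      · rw [h, pow_zero] at hce; omega
      · exact h
    -- K proper implies n ≥ 2
    have hn2 : 2 ≤ n := by
      by_contra h
      have hn1 : n = 1 := by omega
      have hlt : Fintype.card K < Fintype.card F := by
        have hss : (K : Set F) ⊂ Set.univ := by
          refine ⟨Set.subset_univ _, fun h => ha ?_⟩
          apply SetLike.coe_injective
          rw [Subfield.coe_top]
          exact Set.univ_subset_iff.mp h
        have := Set.ncard_lt_ncard hss (Set.finite_univ)
        rwa [Set.ncard_univ, Nat.card_eq_fintype_card, ← Nat.card_coe_set_eq,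
          Nat.card_eq_fintype_card] at this
      rw [hcard, hn1, pow_one, ← hc] at hlt
      exact lt_irrefl _ hlt
    have het : e ≤ t := by
      have h3 : e * 2 ≤ e * n := Nat.mul_le_mul_left e hn2
      rw [hen] at h3
      omega
    have haiK : a i ∈ K := Subfield.subset_closure (Or.inr ⟨i, rfl⟩)
    have hpow : (a i) ^ p ^ e = a i := by
      have h4 := FiniteField.pow_card (⟨a i, haiK⟩ : K)
      rw [← hc, hce] at h4
      simpa using congrArg Subtype.val h4
    exact Set.mem_biUnion (Finset.mem_Icc.mpr ⟨he1, het⟩) hpow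
  -- cardinality of S
  have hScard : S.ncard ≤ 2 * p ^ t := by
    calc S.ncard ≤ ∑ e ∈ Finset.Icc 1 t, {x : F | x ^ p ^ e = x}.ncard :=
          aux_ncard_biUnion_le _ _
      _ ≤ ∑ e ∈ Finset.Icc 1 t, p ^ e := by
          refine Finset.sum_le_sum fun e he => aux_ncard_pow_eq_le _ ?_
          simp only [Finset.mem_Icc] at he
          calc 2 ≤ p := hp2
            _ = p ^ 1 := (pow_one p).symm
            _ ≤ p ^ e := Nat.pow_le_pow_right (by omega) he.1
      _ ≤ 2 * p ^ t := aux_geom_sum_le hp2 t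
  -- B injects into (Fin m → S)
  have hBcard : B.ncard ≤ S.ncard ^ m := by
    have hinj : Function.Injective
        (fun a : B => (fun i => (⟨a.1 i, hmem a.1 a.2 i⟩ : S))) := by
      intro a b hab
      ext i
      exact congrArg Subtype.val (congrFun hab i)
    calc B.ncard = Nat.card B := (Nat.card_coe_set_eq _).symm
      _ ≤ Nat.card (Fin m → S) := Nat.card_le_card_of_injective _ hinj
      _ = Nat.card S ^ m := by simp [Nat.card_fun]
      _ = S.ncard ^ m := by rw [Nat.card_coe_set_eq]
  -- final arithmetic
  have hnat : B.ncard ≤ (2 * p ^ t) ^ m :=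
    hBcard.trans (Nat.pow_le_pow_left hScard m)
  have hp1 : (1 : ℝ) ≤ (p : ℝ) := by exact_mod_cast hp.one_le
  have h2t : 2 * t ≤ k * j := by omega
  have hexp : ((t * m : ℕ) : ℝ) ≤ (k : ℝ) * (((j : ℝ) * (m : ℝ)) / 2) := by
    have h2t' : ((2 * t : ℕ) : ℝ) ≤ ((k * j : ℕ) : ℝ) := by exact_mod_cast h2t
    push_cast at h2t' ⊢
    nlinarith [Nat.cast_nonneg (α := ℝ) m]
  have hfin : ((p : ℝ)) ^ (t * m : ℕ) ≤ ((p ^ k : ℕ) : ℝ) ^ (((j : ℝ) * (m : ℝ)) / 2) := by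
    calc ((p : ℝ)) ^ (t * m : ℕ) = (p : ℝ) ^ (((t * m : ℕ) : ℝ)) :=
          (Real.rpow_natCast _ _).symm
      _ ≤ (p : ℝ) ^ ((k : ℝ) * (((j : ℝ) * (m : ℝ)) / 2)) :=
          Real.rpow_le_rpow_of_exponent_le hp1 hexp
      _ = ((p : ℝ) ^ ((k : ℕ) : ℝ)) ^ (((j : ℝ) * (m : ℝ)) / 2) :=
          Real.rpow_mul (by positivity) _ _
      _ = ((p ^ k : ℕ) : ℝ) ^ (((j : ℝ) * (m : ℝ)) / 2) := by
          rw [Real.rpow_natCast]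
          push_cast
          ring_nf
  calc (B.ncard : ℝ) ≤ (((2 * p ^ t) ^ m : ℕ) : ℝ) := by exact_mod_cast hnat
    _ = 2 ^ m * ((p : ℝ)) ^ (t * m : ℕ) := by push_cast [mul_pow, ← pow_mul]; ring
    _ ≤ 2 ^ m * ((p ^ k : ℕ) : ℝ) ^ (((j : ℝ) * (m : ℝ)) / 2) := by
        have h2 : (0 : ℝ) ≤ 2 ^ m := by positivity
        exact mul_le_mul_of_nonneg_left hfin h2
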